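/- Let Φ be a CNF formula with clauses C_1,…,C_k (k ≥ 1), each clause a finite set of literals involving pairwise distinct variables. If σ is a satisfying assignment of Φ and for each 1 ≤ i ≤ k, l_i ∈ C_i is a literal of C_i made true by σ, then the sequence s, (1,l_1), (2,l_2), …, (k,l_k), t is an irreducible directed path of length k+1 from s to t in G_Φ. -/
import Mathlib


/-- Vertices of the digraph `G_Φ`: a source `s`, a sink `t`, and a vertex
`node i l` for each literal `l` of each clause `C i`. Literals over the variable
type `V` are pairs in `V × Bool`. -/
inductive Vtx (V : Type*) where
  | s : Vtx V
  | t : Vtx V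
  | node : ℕ → V × Bool → Vtx V

/-- Negation of a literal: `(v, b)¯ = (v, ¬b)`. -/
def negLit {V : Type*} (l : V × Bool) : V × Bool := (l.1, !l.2)

/-- Arc relation of the digraph `G_Φ` for a CNF formula with clauses
`C 1, …, C k`: arcs `(s, (1, l))` for `l ∈ C 1`; arcs `((k, l), t)` for
`l ∈ C k`; arcs `((i, x), (i+1, y))` for `x ∈ C i`, `y ∈ C (i+1)` with
`x ≠ ȳ`; and arcs `((i, x), (j, y))` for `x ∈ C i`, `y ∈ C j` with `j > i + 1`
and `x = ȳ`. -/
def arc {V : Type*} (k : ℕ) (C : ℕ → Finset (V × Bool)) : Vtx V → Vtx V → Prop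
  | Vtx.s, Vtx.node i l => i = 1 ∧ l ∈ C 1
  | Vtx.node i l, Vtx.t => i = k ∧ l ∈ C k
  | Vtx.node i x, Vtx.node j y =>
      1 ≤ i ∧ j ≤ k ∧ x ∈ C i ∧ y ∈ C j ∧
        ((j = i + 1 ∧ x ≠ negLit y) ∨ (i + 1 < j ∧ x = negLit y))
  | _, _ => False

/-- The candidate path in `G_Φ`: `s, (1, l 1), (2, l 2), …, (k, l k), t`. -/
def pathSeq {V : Type*} (k : ℕ) (l : ℕ → V × Bool) (r : ℕ) : Vtx V :=
  if r = 0 then Vtx.s else if r ≤ k then Vtx.node r (l r) else Vtx.t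

/-- If `σ` satisfies `Φ` and `l i ∈ C i` is a literal of clause `C i` made true
by `σ` for each `1 ≤ i ≤ k`, then `s, (1, l 1), …, (k, l k), t` is an
irreducible directed path of length `k + 1` from `s` to `t` in `G_Φ`. -/
theorem satisfying_choice_gives_irreduciblePath {V : Type*} (k : ℕ) (hk : 1 ≤ k)
    (C : ℕ → Finset (V × Bool))
    (hdist : ∀ i, 1 ≤ i → i ≤ k → ∀ l ∈ C i, ∀ l' ∈ C i, l.1 = l'.1 → l = l')
    (σ : V → Bool) (l : ℕ → V × Bool)
    (hl : ∀ i, 1 ≤ i → i ≤ k → l i ∈ C i ∧ σ (l i).1 = (l i).2) :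
    pathSeq k l 0 = Vtx.s ∧ pathSeq k l (k + 1) = Vtx.t ∧
      ∀ i j, i < j → j ≤ k + 1 →
        (arc k C (pathSeq k l i) (pathSeq k l j) ↔ j = i + 1) := by
  have key : ∀ a b, 1 ≤ a → a ≤ k → 1 ≤ b → b ≤ k → l a ≠ negLit (l b) := by
    intro a b ha hak hb hbk h
    have h1 := (hl a ha hak).2
    have h2 := (hl b hb hbk).2
    rw [h] at h1
    simp only [negLit] at h1
    rw [h2] at h1
    simp at h1
  refine ⟨rfl, by simp [pathSeq], ?_⟩
  intro i j hij hjk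
  rcases Nat.eq_zero_or_pos i with hi0 | hi1
  · subst hi0
    rcases eq_or_lt_of_le hjk with hj | hj
    · subst hj
      simp only [pathSeq, if_pos rfl, if_neg (by omega : ¬ k + 1 = 0),
        if_neg (by omega : ¬ k + 1 ≤ k)]
      show False ↔ _
      simp only [false_iff]
      omega
    · have hjk' : j ≤ k := by omega
      simp only [pathSeq, if_pos rfl, if_neg (by omega : ¬ j = 0), if_pos hjk']
      constructor
      · rintro ⟨rfl, -⟩; rfl
      · rintro rfl; exact ⟨rfl, (hl 1 le_rfl hk).1⟩
  · have hik : i ≤ k := by omega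
    rcases eq_or_lt_of_le hjk with hj | hj
    · subst hj
      simp only [pathSeq, if_neg (by omega : ¬ i = 0), if_pos hik,
        if_neg (by omega : ¬ k + 1 = 0), if_neg (by omega : ¬ k + 1 ≤ k)]
      constructor
      · rintro ⟨rfl, -⟩; rfl
      · intro h
        have hik' : i = k := by omega
        refine ⟨hik', ?_⟩
        rw [← hik']
        exact (hl i hi1 hik).1
    · have hjk' : j ≤ k := by omega
      simp only [pathSeq, if_neg (by omega : ¬ i = 0), if_pos hik,
        if_neg (by omega : ¬ j = 0), if_pos hjk']
      constructor
      · rintro ⟨-, -, -, -, h | h⟩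
        · exact h.1
        · exact absurd h.2 (key i j hi1 hik (by omega) hjk')
      · rintro rfl
        exact ⟨hi1, hjk', (hl i hi1 hik).1, (hl (i+1) (by omega) hjk').1,
          Or.inl ⟨rfl, key i (i+1) hi1 hik (by omega) hjk'⟩⟩
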